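/- Let N be a positive integer, let Σ ∈ ℂ^{N×N} be Hermitian positive definite, let S ∈ ℂ^{N×N} be Hermitian, and let a ∈ ℂ^N with a ≠ 0. Define γ := Re(aᴴ Σ⁻¹ (S − Σ) Σ⁻¹ a) / (Re(aᴴ Σ⁻¹ a))², and assume γ > 0. Then Re(trace((Σ + γ·(a aᴴ))⁻¹ * S)) + Real.log (Re(det(Σ + γ·(a aᴴ)))) − Re(trace(Σ⁻¹ * S)) − Real.log (Re(det Σ)) = Real.log (1 + γ·Re(aᴴ Σ⁻¹ a)) − γ·Re(aᴴ Σ⁻¹ a). -/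

import Mathlib

open Matrix
open scoped ComplexOrder

lemma aux_trace {N : ℕ} (u v : Fin N → ℂ) (M : Matrix (Fin N) (Fin N) ℂ) :
    Matrix.trace (vecMulVec u v * M) = v ⬝ᵥ (M *ᵥ u) := by
  simp only [Matrix.trace, diag, mul_apply, vecMulVec_apply, dotProduct, mulVec]
  rw [Finset.sum_comm]
  simp [dotProduct, Finset.mul_sum]
  congr 1; ext k; congr 1; ext i; ring

lemma aux_sandwich {N : ℕ} (u v : Fin N → ℂ) (M : Matrix (Fin N) (Fin N) ℂ) :
    vecMulVec u v * M * vecMulVec u v = (v ⬝ᵥ (M *ᵥ u)) • vecMulVec u v := by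
  rw [vecMulVec_eq Unit]
  have h : replicateRow Unit v * M * replicateCol Unit u = (v ⬝ᵥ (M *ᵥ u)) • 1 := by
    ext i j
    simp only [mul_apply, dotProduct, mulVec, Matrix.one_apply, Matrix.smul_apply, if_pos, smul_eq_mul,
      Finset.sum_mul, Finset.mul_sum]
    rw [Finset.sum_comm]
    simp [mul_comm, mul_left_comm]
  calc replicateCol Unit u * replicateRow Unit v * M * (replicateCol Unit u * replicateRow Unit v)
      = replicateCol Unit u * (replicateRow Unit v * M * replicateCol Unit u) * replicateRow Unit v := by
        simp only [Matrix.mul_assoc]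
    _ = (v ⬝ᵥ (M *ᵥ u)) • (replicateCol Unit u * replicateRow Unit v) := by
        rw [h]; simp [Matrix.mul_smul, Matrix.smul_mul]

theorem stmt_17 (N : ℕ) (hN : 0 < N)
    (Sig : Matrix (Fin N) (Fin N) ℂ) (hSig : Sig.PosDef)
    (S : Matrix (Fin N) (Fin N) ℂ) (hS : S.IsHermitian)
    (a : Fin N → ℂ) (ha : a ≠ 0)
    (γ : ℝ)
    (hγ : γ = (star a ⬝ᵥ ((Sig⁻¹ * (S - Sig) * Sig⁻¹) *ᵥ a)).re
        / ((star a ⬝ᵥ (Sig⁻¹ *ᵥ a)).re) ^ 2)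
    (hγpos : 0 < γ) :
    (Matrix.trace ((Sig + (γ : ℂ) • vecMulVec a (star a))⁻¹ * S)).re
        + Real.log ((Sig + (γ : ℂ) • vecMulVec a (star a)).det.re)
        - (Matrix.trace (Sig⁻¹ * S)).re - Real.log (Sig.det.re)
      = Real.log (1 + γ * (star a ⬝ᵥ (Sig⁻¹ *ᵥ a)).re)
        - γ * (star a ⬝ᵥ (Sig⁻¹ *ᵥ a)).re := by
  set V : Matrix (Fin N) (Fin N) ℂ := vecMulVec a (star a) with hV
  set α : ℂ := star a ⬝ᵥ (Sig⁻¹ *ᵥ a) with hαdef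
  set r : ℝ := α.re with hrdef
  have hSinv : Sig⁻¹.PosDef := hSig.inv
  have hαpos : 0 < α := hSinv.dotProduct_mulVec_pos ha
  have hrpos : 0 < r := by
    rw [Complex.lt_def] at hαpos; exact hαpos.1
  have hα_eq : α = (r : ℂ) := by
    rw [Complex.lt_def] at hαpos
    exact Complex.ext rfl hαpos.2.symm
  have hdet : IsUnit Sig.det := hSig.det_pos.ne'.isUnit
  have hmulinv : Sig * Sig⁻¹ = 1 := mul_nonsing_inv _ hdet
  have hinvmul : Sig⁻¹ * Sig = 1 := nonsing_inv_mul _ hdet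
  set β : ℂ := star a ⬝ᵥ ((Sig⁻¹ * S * Sig⁻¹) *ᵥ a) with hβdef
  -- β is real
  have hM : (Sig⁻¹ * S * Sig⁻¹).IsHermitian := by
    have h1 := hSig.isHermitian.inv
    show _ = _
    rw [conjTranspose_mul, conjTranspose_mul, h1.eq, hS.eq, Matrix.mul_assoc]
  have hstar : star β = β := by
    calc star (star a ⬝ᵥ (Sig⁻¹ * S * Sig⁻¹) *ᵥ a)
        = star ((Sig⁻¹ * S * Sig⁻¹) *ᵥ a) ⬝ᵥ a := (star_dotProduct _ _).symm
      _ = (star a ᵥ* (Sig⁻¹ * S * Sig⁻¹)ᴴ) ⬝ᵥ a := by rw [star_mulVec]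
      _ = star a ⬝ᵥ (Sig⁻¹ * S * Sig⁻¹)ᴴ *ᵥ a := (dotProduct_mulVec _ _ _).symm
      _ = β := by rw [hM.eq]
  have hβ_eq : β = (β.re : ℂ) := (Complex.conj_eq_iff_re.mp hstar).symm
  -- γ relation
  have hmat : Sig⁻¹ * (S - Sig) * Sig⁻¹ = Sig⁻¹ * S * Sig⁻¹ - Sig⁻¹ := by
    rw [Matrix.mul_sub, Matrix.sub_mul, Matrix.mul_assoc, Matrix.mul_assoc]
    congr 1
    rw [← Matrix.mul_assoc, hinvmul, Matrix.one_mul]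
  have hγ2 : γ = (β.re - r) / r ^ 2 := by
    rw [hγ, hmat]
    congr 2
    rw [Matrix.sub_mulVec, dotProduct_sub, Complex.sub_re]
  have hβre : β.re = γ * r ^ 2 + r := by
    field_simp at hγ2; linarith [hγ2]
  have h1r : (0:ℝ) < 1 + γ * r := by positivity
  set c : ℝ := γ / (1 + γ * r) with hcdef
  have hc1 : c * (1 + γ * r) = γ := by rw [hcdef, div_mul_cancel₀ _ h1r.ne']
  set T : Matrix (Fin N) (Fin N) ℂ := Sig⁻¹ - (c : ℂ) • (Sig⁻¹ * V * Sig⁻¹) with hT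
  have hVsand : V * Sig⁻¹ * V = α • V := aux_sandwich a (star a) Sig⁻¹
  have hBT : (Sig + (γ : ℂ) • V) * T = 1 := by
    have e1 : Sig * (Sig⁻¹ * V * Sig⁻¹) = V * Sig⁻¹ := by
      rw [Matrix.mul_assoc, ← Matrix.mul_assoc Sig, hmulinv, Matrix.one_mul]
    have e2 : V * (Sig⁻¹ * V * Sig⁻¹) = α • (V * Sig⁻¹) := by
      calc V * (Sig⁻¹ * V * Sig⁻¹) = (V * Sig⁻¹ * V) * Sig⁻¹ := by
            simp only [Matrix.mul_assoc]
        _ = α • (V * Sig⁻¹) := by rw [hVsand, Matrix.smul_mul]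
    have hc0 : (γ : ℂ) - c - (γ : ℂ) * c * α = 0 := by
      rw [hα_eq]
      have h : (γ : ℝ) - c - γ * c * r = 0 := by nlinarith [hc1]
      exact_mod_cast congrArg (Complex.ofReal ·) h
    rw [hT, Matrix.add_mul, Matrix.mul_sub, Matrix.mul_sub, Matrix.mul_smul, Matrix.mul_smul,
      Matrix.smul_mul, Matrix.smul_mul, e1, e2, hmulinv, smul_smul, smul_smul]
    have key : (γ:ℂ) • (V * Sig⁻¹) - ((c:ℂ) * ↑γ * α) • (V * Sig⁻¹) = (c:ℂ) • (V * Sig⁻¹) := by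
      rw [← sub_smul]
      congr 1
      linear_combination hc0
    rw [key]
    abel
  have hBinv : (Sig + (γ : ℂ) • V)⁻¹ = T := inv_eq_right_inv hBT
  have htrβ : Matrix.trace (Sig⁻¹ * V * Sig⁻¹ * S) = β := by
    rw [show Sig⁻¹ * V * Sig⁻¹ * S = Sig⁻¹ * (V * (Sig⁻¹ * S)) from by
        simp only [Matrix.mul_assoc],
      Matrix.trace_mul_comm,
      show V * (Sig⁻¹ * S) * Sig⁻¹ = V * (Sig⁻¹ * S * Sig⁻¹) from by
        simp only [Matrix.mul_assoc],
      aux_trace]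
  have htrace : Matrix.trace (T * S) = Matrix.trace (Sig⁻¹ * S) - (c : ℂ) * β := by
    rw [hT, Matrix.sub_mul, Matrix.smul_mul, trace_sub, trace_smul, htrβ, smul_eq_mul]
  have hcβ : ((c : ℂ) * β).re = γ * r := by
    rw [hβ_eq, ← Complex.ofReal_mul, Complex.ofReal_re, hβre, hcdef]
    field_simp
    ring
  -- determinant
  have hdetB : (Sig + (γ : ℂ) • V).det = Sig.det * ((1 + γ * r : ℝ) : ℂ) := by
    have hcol : (γ : ℂ) • V = replicateCol Unit ((γ : ℂ) • a) * replicateRow Unit (star a) := by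
      rw [← vecMulVec_eq]
      ext i j
      simp [hV, vecMulVec_apply]
      ring
    rw [hcol, det_add_replicateCol_mul_replicateRow hdet]
    congr 1
    rw [Matrix.mul_assoc, ← Matrix.mul_assoc, ← replicateRow_vecMul, det_unique]
    simp only [Matrix.add_apply, Matrix.one_apply_eq, replicateRow_mul_replicateCol_apply]
    rw [dotProduct_smul, ← dotProduct_mulVec, ← hαdef, hα_eq, smul_eq_mul]
    push_cast
    ring
  have hd := hSig.det_pos
  rw [Complex.lt_def] at hd
  have hdet_eq : Sig.det = ((Sig.det.re : ℝ) : ℂ) := Complex.ext rfl hd.2.symm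
  have hdetre : (Sig + (γ : ℂ) • V).det.re = Sig.det.re * (1 + γ * r) := by
    rw [hdetB, hdet_eq, ← Complex.ofReal_mul, Complex.ofReal_re]
    simp
  have hdetrepos : 0 < Sig.det.re := by simpa using hd.1
  rw [hBinv, htrace, hdetre, Real.log_mul hdetrepos.ne' h1r.ne', Complex.sub_re, hcβ]
  ring
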